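/- Let V be a finite-dimensional real inner product space and let p ≥ 2. Then for every x, y ∈ V it holds that ⟨|x|^{p-2}x - |y|^{p-2}y, x - y⟩ ≥ (2/(p(2^{p-1}-1)))|x - y|^p. -/

import Mathlib

open scoped RealInnerProductSpace

section aux
variable (p : ℝ)

private lemma add_rpow_le' {q a b : ℝ} (hq : 1 ≤ q) (ha : 0 ≤ a) (hb : 0 ≤ b) :
    a^q + b^q ≤ (a+b)^q := by
  have h := NNReal.add_rpow_le_rpow_add (a.toNNReal) (b.toNNReal) hq
  have := NNReal.coe_le_coe.mpr h
  push_cast at this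
  rwa [Real.coe_toNNReal a ha, Real.coe_toNNReal b hb] at this

private lemma rpow_add_le' {q a b : ℝ} (hq : 1 ≤ q) (ha : 0 ≤ a) (hb : 0 ≤ b) :
    (a+b)^q ≤ 2^(q-1) * (a^q + b^q) := by
  have h := NNReal.rpow_add_le_mul_rpow_add_rpow (a.toNNReal) (b.toNNReal) hq
  have := NNReal.coe_le_coe.mpr h
  push_cast at this
  rwa [Real.coe_toNNReal a ha, Real.coe_toNNReal b hb] at this

private lemma le_two_rpow {p : ℝ} (hp : 2 ≤ p) : p ≤ (2:ℝ)^(p-1) := by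
  have h1 : (2:ℝ)^(p-1) = 2 * 2^(p-2) := by
    rw [show p - 1 = 1 + (p-2) by ring, Real.rpow_add (by norm_num : (0:ℝ) < 2), Real.rpow_one]
  have h2 : (2:ℝ)^(p-2) = Real.exp ((p-2) * Real.log 2) := by
    rw [Real.rpow_def_of_pos (by norm_num : (0:ℝ) < 2), mul_comm]
  have h3 : (p-2) * Real.log 2 + 1 ≤ Real.exp ((p-2)*Real.log 2) := Real.add_one_le_exp _
  have h4 : (0.6931471803 : ℝ) < Real.log 2 := Real.log_two_gt_d9
  nlinarith [sub_nonneg.mpr hp]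

private lemma two_le_two_rpow {p : ℝ} (hp : 2 ≤ p) : (2:ℝ) ≤ (2:ℝ)^(p-1) := by
  calc (2:ℝ) = 2^(1:ℝ) := (Real.rpow_one 2).symm
  _ ≤ 2^(p-1) := (Real.rpow_le_rpow_left_iff (by norm_num : (1:ℝ) < 2)).mpr (by linarith)

-- the constant
private lemma C_pos {p : ℝ} (hp : 2 ≤ p) : 0 < 2 / (p * ((2:ℝ)^(p-1) - 1)) := by
  have := two_le_two_rpow hp
  have : (0:ℝ) < p * ((2:ℝ)^(p-1) - 1) := by nlinarith
  positivity

private lemma C_le_one {p : ℝ} (hp : 2 ≤ p) : 2 / (p * ((2:ℝ)^(p-1) - 1)) ≤ 1 := by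
  have h := two_le_two_rpow hp
  rw [div_le_one (by nlinarith)]
  nlinarith

-- C * 2^(p-2) ≤ 1
private lemma C_mul_le_one {p : ℝ} (hp : 2 ≤ p) :
    2 / (p * ((2:ℝ)^(p-1) - 1)) * 2^(p-2) ≤ 1 := by
  have h := two_le_two_rpow hp
  have h2 := le_two_rpow hp
  have hd : (0:ℝ) < p * ((2:ℝ)^(p-1) - 1) := by nlinarith
  rw [div_mul_eq_mul_div, div_le_one hd]
  have h1 : (2:ℝ)^(p-1) = 2 * 2^(p-2) := by
    rw [show p - 1 = 1 + (p-2) by ring, Real.rpow_add (by norm_num : (0:ℝ) < 2), Real.rpow_one]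
  -- need 2*2^(p-2) ≤ p*(2^(p-1)-1), i.e. 2^(p-1) ≤ p*2^(p-1) - p, i.e. p ≤ (p-1)*2^(p-1)
  nlinarith [h, h2]

private lemma rpow_mul_self {α : ℝ} (hα : 0 ≤ α) {p : ℝ} (hp : 2 ≤ p) :
    α^(p-2) * α = α^(p-1) := by
  rcases eq_or_lt_of_le hα with h | h
  · rw [← h, Real.zero_rpow (by linarith : p - 1 ≠ 0), mul_zero]
  · rw [show p - 1 = (p-2) + 1 by ring, Real.rpow_add_one (ne_of_gt h)]

-- (d^2)^(p/2) = d^p for d ≥ 0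
private lemma sq_rpow_half {d : ℝ} (hd : 0 ≤ d) {p : ℝ} : (d^2)^(p/2) = d^p := by
  rw [← Real.rpow_natCast d 2, ← Real.rpow_mul hd]
  norm_num
  rw [show (2:ℝ) * (p/2) = p by ring]

end aux

section main
variable {p : ℝ}

private lemma rpow_split {d : ℝ} (hd : 0 ≤ d) (hp : 2 ≤ p) : d^p = d^(p-1) * d := by
  rcases eq_or_lt_of_le hd with h | h
  · rw [← h, Real.zero_rpow (by linarith : p ≠ 0), Real.zero_rpow (by linarith : p - 1 ≠ 0),
      zero_mul]
  · rw [show p = (p-1) + 1 by ring, Real.rpow_add_one (ne_of_gt h)]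
    ring_nf

private lemma E1core (hp : 2 ≤ p) {α β : ℝ} (hβ : 0 ≤ β) (hba : β ≤ α) :
    2 / (p * ((2:ℝ)^(p-1) - 1)) * ((α - β)^2)^(p/2) ≤
      α^(p-2) * (α^2 - α*β) + β^(p-2) * (β^2 - α*β) := by
  set C := 2 / (p * ((2:ℝ)^(p-1) - 1)) with hC
  have hα : 0 ≤ α := le_trans hβ hba
  have hd : 0 ≤ α - β := by linarith
  have hCle := C_le_one hp
  have hCpos := C_pos hp
  rw [sq_rpow_half hd, rpow_split hd hp]
  have hsuper : β^(p-1) + (α-β)^(p-1) ≤ α^(p-1) := by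
    have := add_rpow_le' (by linarith : 1 ≤ p - 1) hβ hd
    rwa [show β + (α - β) = α by ring] at this
  have hdp : (0:ℝ) ≤ (α-β)^(p-1) := Real.rpow_nonneg hd _
  have key : C * (α-β)^(p-1) ≤ α^(p-1) - β^(p-1) := by nlinarith
  have e1 : α^(p-2) * (α^2 - α*β) = α^(p-1) * (α - β) := by
    rw [← rpow_mul_self hα hp]; ring
  have e2 : β^(p-2) * (β^2 - α*β) = -(β^(p-1) * (α - β)) := by
    rw [← rpow_mul_self hβ hp]; ring
  rw [e1, e2]
  nlinarith [key, hd]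

private lemma E1 (hp : 2 ≤ p) {α β : ℝ} (hα : 0 ≤ α) (hβ : 0 ≤ β) :
    2 / (p * ((2:ℝ)^(p-1) - 1)) * ((α - β)^2)^(p/2) ≤
      α^(p-2) * (α^2 - α*β) + β^(p-2) * (β^2 - α*β) := by
  rcases le_total β α with h | h
  · exact E1core hp hβ h
  · have := E1core hp hα h
    rw [show (β - α)^2 = (α - β)^2 by ring] at this
    rw [show β * α = α * β by ring] at this
    linarith

private lemma E2 (hp : 2 ≤ p) {α β : ℝ} (hα : 0 ≤ α) (hβ : 0 ≤ β) :
    2 / (p * ((2:ℝ)^(p-1) - 1)) * ((α + β)^2)^(p/2) ≤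
      α^(p-2) * (α^2 + α*β) + β^(p-2) * (β^2 + α*β) := by
  set C := 2 / (p * ((2:ℝ)^(p-1) - 1)) with hC
  have hs : 0 ≤ α + β := by linarith
  have hCpos := C_pos hp
  have hCm := C_mul_le_one hp
  rw [sq_rpow_half hs, rpow_split hs hp]
  have hconv : (α+β)^(p-1) ≤ 2^(p-1-1) * (α^(p-1) + β^(p-1)) :=
    rpow_add_le' (by linarith : 1 ≤ p - 1) hα hβ
  rw [show p - 1 - 1 = p - 2 by ring] at hconv
  have hsum : (0:ℝ) ≤ α^(p-1) + β^(p-1) :=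
    add_nonneg (Real.rpow_nonneg hα _) (Real.rpow_nonneg hβ _)
  have h2 : (0:ℝ) ≤ (2:ℝ)^(p-2) := Real.rpow_nonneg (by norm_num) _
  have key : C * (α+β)^(p-1) ≤ α^(p-1) + β^(p-1) := by
    calc C * (α+β)^(p-1) ≤ C * (2^(p-2) * (α^(p-1) + β^(p-1))) := by
          exact mul_le_mul_of_nonneg_left hconv (le_of_lt hCpos)
    _ = (C * 2^(p-2)) * (α^(p-1) + β^(p-1)) := by ring
    _ ≤ 1 * (α^(p-1) + β^(p-1)) := mul_le_mul_of_nonneg_right hCm hsum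
    _ = α^(p-1) + β^(p-1) := one_mul _
  have e1 : α^(p-2) * (α^2 + α*β) = α^(p-1) * (α + β) := by
    rw [← rpow_mul_self hα hp]; ring
  have e2 : β^(p-2) * (β^2 + α*β) = β^(p-1) * (α + β) := by
    rw [← rpow_mul_self hβ hp]; ring
  rw [e1, e2]
  nlinarith [key, hs]

end main

private lemma keyIneq {p : ℝ} (hp : 2 ≤ p) {α β c : ℝ} (hα : 0 ≤ α) (hβ : 0 ≤ β)
    (hc : |c| ≤ α * β) :
    2 / (p * ((2:ℝ)^(p-1) - 1)) * (α^2 - 2*c + β^2)^(p/2) ≤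
      α^(p-2) * (α^2 - c) + β^(p-2) * (β^2 - c) := by
  set C := 2 / (p * ((2:ℝ)^(p-1) - 1)) with hCdef
  have hCpos := C_pos (p := p) hp
  set m := α * β with hm
  have hm0 : 0 ≤ m := mul_nonneg hα hβ
  rw [abs_le] at hc
  rcases eq_or_lt_of_le hm0 with hme | hmpos
  · -- m = 0, so c = 0
    have hc0 : c = 0 := le_antisymm (by linarith [hc.2]) (by linarith [hc.1])
    have h := E1 hp hα hβ
    have e1 : α^2 - 2*c + β^2 = (α - β)^2 := by
      rw [hc0]; linear_combination (-2) * hme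
    rw [e1, hc0]
    rw [show α * β = m from rfl, ← hme] at h
    simpa using h
  · -- m > 0: convex combination
    set t := (c + m) / (2*m) with ht
    have ht0 : 0 ≤ t := by
      apply div_nonneg (by linarith [hc.1]) (by linarith)
    have ht1 : t ≤ 1 := by
      rw [div_le_one (by linarith)]; linarith [hc.2]
    have hmt : m - 2*m*t = -c := by
      have h2mt : 2*m*t = c + m := by
        rw [ht]; field_simp [hmpos.ne']
      linarith
    set a := α^2 + 2*m + β^2 with ha
    set b := α^2 - 2*m + β^2 with hb
    have ha0 : (0:ℝ) ≤ a := by nlinarith [sq_nonneg (α + β)]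
    have hb0 : (0:ℝ) ≤ b := by nlinarith [sq_nonneg (α - β)]
    have hcomb : (1-t) * a + t * b = α^2 - 2*c + β^2 := by
      linear_combination 2 * hmt
    have hcv := (convexOn_rpow (by linarith : 1 ≤ p/2)).2
      (Set.mem_Ici.mpr ha0) (Set.mem_Ici.mpr hb0) (by linarith : (0:ℝ) ≤ 1 - t) ht0
      (by ring : (1 - t) + t = 1)
    simp only [smul_eq_mul] at hcv
    rw [hcomb] at hcv
    have h2 := E2 hp hα hβ
    have h1 := E1 hp hα hβ
    rw [show (α + β)^2 = a by rw [ha, hm]; ring] at h2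
    rw [show (α - β)^2 = b by rw [hb, hm]; ring] at h1
    calc C * (α^2 - 2*c + β^2)^(p/2)
        ≤ C * ((1-t) * a^(p/2) + t * b^(p/2)) :=
          mul_le_mul_of_nonneg_left hcv (le_of_lt hCpos)
      _ = (1-t) * (C * a^(p/2)) + t * (C * b^(p/2)) := by ring
      _ ≤ (1-t) * (α^(p-2) * (α^2 + α*β) + β^(p-2) * (β^2 + α*β))
            + t * (α^(p-2) * (α^2 - α*β) + β^(p-2) * (β^2 - α*β)) := by
          apply add_le_add
          · exact mul_le_mul_of_nonneg_left h2 (by linarith)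
          · exact mul_le_mul_of_nonneg_left h1 ht0
      _ = α^(p-2) * (α^2 - c) + β^(p-2) * (β^2 - c) := by
          rw [← hm]; linear_combination (α^(p-2) + β^(p-2)) * hmt

/-- Monotonicity inequality for the `p`-Laplacian:
`⟨|x|^{p-2}x - |y|^{p-2}y, x - y⟩ ≥ (2/(p(2^{p-1}-1)))|x-y|^p` for `p ≥ 2`. -/
theorem pLaplace_monotonicity
    {V : Type*} [NormedAddCommGroup V] [InnerProductSpace ℝ V] [FiniteDimensional ℝ V]
    (p : ℝ) (hp : 2 ≤ p) (x y : V) :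
    ⟪‖x‖ ^ (p - 2) • x - ‖y‖ ^ (p - 2) • y, x - y⟫ ≥
      (2 / (p * ((2 : ℝ) ^ (p - 1) - 1))) * ‖x - y‖ ^ p := by
  have h1 : ⟪‖x‖ ^ (p - 2) • x - ‖y‖ ^ (p - 2) • y, x - y⟫ =
      ‖x‖^(p-2) * (‖x‖^2 - ⟪x,y⟫) + ‖y‖^(p-2) * (‖y‖^2 - ⟪x,y⟫) := by
    rw [inner_sub_left, inner_sub_right, inner_sub_right, real_inner_smul_left,
      real_inner_smul_left, real_inner_smul_left, real_inner_smul_left,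
      real_inner_self_eq_norm_sq, real_inner_self_eq_norm_sq, real_inner_comm y x]
    ring
  have h2 : ‖x - y‖^p = (‖x‖^2 - 2*⟪x,y⟫ + ‖y‖^2)^(p/2) := by
    have hn : ‖x - y‖^2 = ‖x‖^2 - 2*⟪x,y⟫ + ‖y‖^2 := by
      exact norm_sub_sq_real x y
    rw [← sq_rpow_half (norm_nonneg (x - y)), hn]
  have hc : |⟪x,y⟫| ≤ ‖x‖ * ‖y‖ := abs_real_inner_le_norm x y
  rw [ge_iff_le, h1, h2]
  exact keyIneq hp (norm_nonneg x) (norm_nonneg y) hc
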